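/- arXiv:2410.02124 — 2 statements merged into one kernel-verified Lean document; each statement's English description precedes it below -/
import Mathlib

section
/- Let c ≥ 18, let G be a finite connected simple graph with minimum degree at least c and with |V(G)| ≥ c + 2, and let ρ be a rotation system on G. Then the genus of (G,ρ) is strictly greater than ⌈(c−2)(c−3)/12⌉. In particular, no such graph has an embedding of genus γ(K_{c+1}). -/
namespace DualSep

open SimpleGraph

variable {V : Type*} [Fintype V] [DecidableEq V]

/-- The dart-reversal permutation of a simple graph. -/
def dartRev (G : SimpleGraph V) : Equiv.Perm G.Dart :=
  Function.Involutive.toPerm SimpleGraph.Dart.symm SimpleGraph.Dart.symm_involutive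

/-- `ρ` is a rotation system on `G`: it permutes the darts, preserves the initial vertex of
each dart, and the darts leaving any fixed vertex form a single orbit. -/
structure IsRotationSystem (G : SimpleGraph V) (ρ : Equiv.Perm G.Dart) : Prop where
  fst_fixed : ∀ d : G.Dart, (ρ d).fst = d.fst
  single_orbit : ∀ d d' : G.Dart, d.fst = d'.fst → ∃ n : ℕ, (ρ ^ n) d = d'

/-- The face permutation `φ = ρ ∘ rev` of a rotation system. -/
def facePerm {G : SimpleGraph V} (ρ : Equiv.Perm G.Dart) : Equiv.Perm G.Dart :=
  ρ * dartRev G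

/-- The face (orbit of the face permutation) containing a given dart. -/
def faceOf {G : SimpleGraph V} (ρ : Equiv.Perm G.Dart) (d : G.Dart) : Set G.Dart :=
  {d' | (facePerm ρ).SameCycle d d'}

/-- The set of faces of `(G, ρ)`. -/
def faces {G : SimpleGraph V} (ρ : Equiv.Perm G.Dart) : Set (Set G.Dart) :=
  Set.range (faceOf ρ)

/-- The dual graph is simple: no dual edge joins a face to itself, and no two distinct
faces are joined by more than one dual edge. -/
def DualSimple {G : SimpleGraph V} (ρ : Equiv.Perm G.Dart) : Prop :=
  (∀ d : G.Dart, faceOf ρ d ≠ faceOf ρ d.symm) ∧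
  (∀ d d' : G.Dart, d.edge ≠ d'.edge →
    ¬(faceOf ρ d = faceOf ρ d' ∧ faceOf ρ d.symm = faceOf ρ d'.symm) ∧
    ¬(faceOf ρ d = faceOf ρ d'.symm ∧ faceOf ρ d.symm = faceOf ρ d'))

/-- The dual graph of `(G, ρ)`, as a simple graph on the set of faces: two distinct faces
are adjacent when some edge of `G` induces a dual edge between them. -/
def dualGraph {G : SimpleGraph V} (ρ : Equiv.Perm G.Dart) : SimpleGraph (faces ρ) where
  Adj F₁ F₂ := F₁ ≠ F₂ ∧
    ∃ d : G.Dart, faceOf ρ d = (F₁ : Set G.Dart) ∧ faceOf ρ d.symm = (F₂ : Set G.Dart)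
  symm := by
    constructor
    rintro F₁ F₂ ⟨hne, d, h1, h2⟩
    exact ⟨hne.symm, d.symm, h2, by rwa [SimpleGraph.Dart.symm_symm]⟩
  loopless := by constructor; rintro F ⟨hne, -⟩; exact hne rfl

/-- `C` is a cutface: a face whose removal disconnects the dual graph. -/
def IsCutface {G : SimpleGraph V} (ρ : Equiv.Perm G.Dart) (C : Set G.Dart) : Prop :=
  C ∈ faces ρ ∧
    ¬((dualGraph ρ).induce {F : faces ρ | (F : Set G.Dart) ≠ C}).Connected

end DualSep
section Aux
open SimpleGraph DualSep

variable {V : Type*} [Fintype V] [DecidableEq V] {G : SimpleGraph V}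

lemma faceOf_eq_of_sameCycle {ρ : Equiv.Perm G.Dart} {d d' : G.Dart}
    (h : (facePerm ρ).SameCycle d d') : faceOf ρ d = faceOf ρ d' := by
  ext x
  exact ⟨fun hx => h.symm.trans hx, fun hx => h.trans hx⟩

lemma facePerm_apply (ρ : Equiv.Perm G.Dart) (d : G.Dart) :
    facePerm ρ d = ρ d.symm := by
  simp [facePerm, dartRev, Equiv.Perm.mul_apply]

lemma facePerm_ne (ρ : Equiv.Perm G.Dart) (hρ : IsRotationSystem G ρ) (d : G.Dart) :
    facePerm ρ d ≠ d := by
  intro h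
  have h1 : (facePerm ρ d).fst = d.snd := by
    rw [facePerm_apply, hρ.fst_fixed]; simp
  rw [h] at h1
  exact G.ne_of_adj d.adj h1

lemma facePerm_sq_ne (ρ : Equiv.Perm G.Dart) (hρ : IsRotationSystem G ρ) (d : G.Dart)
    (hdeg : 1 < (G.neighborSet d.fst).ncard) :
    facePerm ρ (facePerm ρ d) ≠ d := by
  intro h
  set e := facePerm ρ d with he
  have hefst : e.fst = d.snd := by rw [he, facePerm_apply, hρ.fst_fixed]; simp
  have hesnd : e.snd = d.fst := by
    have : (facePerm ρ e).fst = e.snd := by rw [facePerm_apply, hρ.fst_fixed]; simp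
    rw [h] at this; exact this.symm
  have heeq : e = d.symm := by
    apply SimpleGraph.Dart.ext
    rw [SimpleGraph.Dart.symm_toProd]
    exact Prod.ext hefst hesnd
  -- so ρ d = d
  have hfix : ρ d = d := by
    have h' := h
    rw [heeq, facePerm_apply, SimpleGraph.Dart.symm_symm] at h'
    exact h'
  have hfixpow : ∀ k : ℕ, (ρ ^ k) d = d := by
    intro k
    induction k with
    | zero => rfl
    | succ k ih => rw [pow_succ, Equiv.Perm.mul_apply, hfix, ih]
  -- get a second dart at d.fst
  obtain ⟨u, hu, hune⟩ := Set.exists_ne_of_one_lt_ncard hdeg d.snd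
  have hadj : G.Adj d.fst u := hu
  let e' : G.Dart := ⟨(d.fst, u), hadj⟩
  obtain ⟨n, hn⟩ := hρ.single_orbit d e' rfl
  rw [hfixpow n] at hn
  exact hune (congrArg (fun x : G.Dart => x.toProd.2) hn).symm
end Aux

open DualSep in
/-- Plummer–Zha: for `c ≥ 18`, a connected graph with minimum degree at least `c` on more
than `c + 1` vertices has every embedding of genus strictly greater than
`⌈(c-2)(c-3)/12⌉ = γ(K_{c+1})`. -/
theorem stmt11 {V : Type*} [Fintype V] [DecidableEq V] (G : SimpleGraph V)
    (hconn : G.Connected) (c : ℕ) (hc : 18 ≤ c)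
    (hdeg : ∀ v : V, c ≤ (G.neighborSet v).ncard)
    (hcard : c + 2 ≤ Fintype.card V)
    (ρ : Equiv.Perm G.Dart) (hρ : IsRotationSystem G ρ)
    (g : ℤ)
    (hEuler : (Fintype.card V : ℤ) - (G.edgeSet.ncard : ℤ) + ((faces ρ).ncard : ℤ)
      = 2 - 2 * g) :
    ⌈(((c : ℚ) - 2) * ((c : ℚ) - 3)) / 12⌉ < g := by
  classical
  set n := Fintype.card V with hn
  set m := G.edgeFinset.card with hm
  -- edge set ncard
  have hm' : G.edgeSet.ncard = m := by
    rw [Set.ncard_eq_toFinset_card']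
    exact congrArg Finset.card (by ext; simp)
  -- degree sum
  have hdeg' : ∀ v : V, c ≤ G.degree v := by
    intro v
    have := hdeg v
    rwa [Set.ncard_eq_toFinset_card', ← SimpleGraph.neighborFinset_def] at this
  have hsum : n * c ≤ 2 * m := by
    calc n * c = ∑ _v : V, c := by rw [Finset.sum_const, Finset.card_univ, smul_eq_mul]
    _ ≤ ∑ v : V, G.degree v := Finset.sum_le_sum (fun v _ => hdeg' v)
    _ = 2 * m := G.sum_degrees_eq_twice_card_edges
  -- faces
  set Faces : Finset (Set G.Dart) := Finset.univ.image (faceOf ρ) with hF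
  have hfaces : (faces ρ).ncard = Faces.card := by
    rw [hF, ← Set.ncard_coe_finset]
    congr 1
    rw [Finset.coe_image, Finset.coe_univ, Set.image_univ]
    rfl
  have hfiber : (Finset.univ : Finset G.Dart).card
      = ∑ F ∈ Faces, (Finset.univ.filter (fun d => faceOf ρ d = F)).card :=
    Finset.card_eq_sum_card_fiberwise (fun x _ => Finset.mem_image_of_mem _ (Finset.mem_univ x))
  have hthree : ∀ F ∈ Faces, 3 ≤ (Finset.univ.filter (fun d => faceOf ρ d = F)).card := by
    intro F hFmem
    obtain ⟨d, -, hd⟩ := Finset.mem_image.mp hFmem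
    have h1 : facePerm ρ d ≠ d := facePerm_ne ρ hρ d
    have hdegd : 1 < (G.neighborSet d.fst).ncard := lt_of_lt_of_le (by omega) (hdeg d.fst)
    have h2 : facePerm ρ (facePerm ρ d) ≠ d := facePerm_sq_ne ρ hρ d hdegd
    have h3 : facePerm ρ (facePerm ρ d) ≠ facePerm ρ d := fun h => h1 ((facePerm ρ).injective h)
    have hmem : ∀ k : ℕ, ((facePerm ρ) ^ k) d ∈ Finset.univ.filter (fun d' => faceOf ρ d' = F) := by
      intro k
      refine Finset.mem_filter.mpr ⟨Finset.mem_univ _, ?_⟩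
      rw [← hd]
      exact (faceOf_eq_of_sameCycle ⟨(k : ℤ), by rw [zpow_natCast]⟩).symm
    have hsub : ({d, facePerm ρ d, facePerm ρ (facePerm ρ d)} : Finset G.Dart)
        ⊆ Finset.univ.filter (fun d' => faceOf ρ d' = F) := by
      intro x hx
      simp only [Finset.mem_insert, Finset.mem_singleton] at hx
      rcases hx with rfl | rfl | rfl
      · simpa using hmem 0
      · simpa using hmem 1
      · have := hmem 2
        rwa [pow_succ, pow_one, Equiv.Perm.mul_apply] at this
    calc (3 : ℕ) = ({d, facePerm ρ d, facePerm ρ (facePerm ρ d)} : Finset G.Dart).card := by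
          rw [Finset.card_insert_of_notMem (by
              simp only [Finset.mem_insert, Finset.mem_singleton]
              exact fun hx => hx.elim (fun hh => h1 hh.symm) (fun hh => h2 hh.symm)),
            Finset.card_insert_of_notMem (by
              simp only [Finset.mem_singleton]
              exact fun hh => h3 hh.symm), Finset.card_singleton]
    _ ≤ _ := Finset.card_le_card hsub
  have hfcount : 3 * Faces.card ≤ 2 * m := by
    calc 3 * Faces.card = Faces.card • 3 := by rw [smul_eq_mul, mul_comm]
    _ ≤ ∑ F ∈ Faces, (Finset.univ.filter (fun d => faceOf ρ d = F)).card :=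
        Finset.card_nsmul_le_sum _ _ _ hthree
    _ = (Finset.univ : Finset G.Dart).card := hfiber.symm
    _ = Fintype.card G.Dart := Finset.card_univ
    _ = 2 * m := G.dart_card_eq_twice_card_edges
  -- arithmetic
  rw [hm', hfaces] at hEuler
  have hlt : (⌈(((c : ℚ) - 2) * ((c : ℚ) - 3)) / 12⌉ : ℤ) ≤ g - 1 := by
    rw [Int.ceil_le]
    have h1 : (n : ℚ) * c ≤ 2 * m := by exact_mod_cast hsum
    have h2 : 3 * (Faces.card : ℚ) ≤ 2 * m := by exact_mod_cast hfcount
    have h3 : (c : ℚ) + 2 ≤ n := by exact_mod_cast hcard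
    have h4 : (18 : ℚ) ≤ c := by exact_mod_cast hc
    have h5 : (n : ℚ) - m + Faces.card = 2 - 2 * g := by exact_mod_cast hEuler
    push_cast
    nlinarith [mul_nonneg (by linarith : (0:ℚ) ≤ (n : ℚ) - (c + 2)) (by linarith : (0:ℚ) ≤ (c:ℚ) - 6)]
  omega
end

section
/- There exists a rotation system ρ on the complete graph K_{15} with exactly 66 faces, of which 65 have length 3 and one has length 15, such that the dual graph of (K_{15}, ρ) is simple and the face of length 15 is a cutface. In particular the genus of (K_{15}, ρ) is 13 = γ(K_{15}) + 2. -/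
namespace K15P

set_option maxRecDepth 100000
set_option maxHeartbeats 16000000

open SimpleGraph DualSep

abbrev G15 : SimpleGraph (Fin 15) := ⊤
abbrev D := G15.Dart

def nextTab : Nat := 86388883655292128864564129814294652062464044058818452984832309272367628120667740191013452570806697376660075789752338130931858788683481163812257638905650612672759944476788237896900590375470055228342189570200917834126999628929866433141236237397620174506893662349513372640
def prevTab : Nat := 385030170279911125522525305157651538994662402871269250872163582526022651148059771880459901904404886300033015861018833949079198050820242355466811003181644456632878701292918017543542578784499641749230072180926068654985686889235055806878027626380885036818268828695902103440
def fidxTab : Nat := 5055735964395183499402856361837831863272004112995596215643946923759797924551224090814582459332980995264441838814368468953754160903318798256809272915912650494745998207913592926735423153446559359203497979667670639197350978706902846969684450356234313300778882817051225879691211935466386048570150702227554903086047524107990033364336077008570156022523322477877546561705101484337487492310207210851781462725360879897402590901953452552744501013682979610938393672937008407156637696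
def repTab : Nat := 719351453119036693437454882480402185775242752197795648865211014350802226336364365400852165280252016452160020554930223389094963334215306903005353890735297069569
def cntTab : Nat := 28160636102515298727012463554112899189915260270683785174396084430724473128432435
def labTab : Nat := 36317027395115679744

def nf (u v : Fin 15) : Fin 15 := ⟨nextTab / 16 ^ (u.1 * 15 + v.1) % 16 % 15, Nat.mod_lt _ (by norm_num)⟩
def pf (u v : Fin 15) : Fin 15 := ⟨prevTab / 16 ^ (u.1 * 15 + v.1) % 16 % 15, Nat.mod_lt _ (by norm_num)⟩
def fi (u v : Fin 15) : Nat := fidxTab / 128 ^ (u.1 * 15 + v.1) % 128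
def lab (n : Nat) : Bool := labTab / 2 ^ n % 2 == 1
def cnt (n : Nat) : Nat := cntTab / 16 ^ n % 16
def rpu (i : Nat) : Fin 15 := ⟨repTab / 256 ^ i % 256 / 15 % 15, Nat.mod_lt _ (by norm_num)⟩
def rpv (i : Nat) : Fin 15 := ⟨repTab / 256 ^ i % 256 % 15, Nat.mod_lt _ (by norm_num)⟩

def fstep (p : Fin 15 × Fin 15) : Fin 15 × Fin 15 := (p.2, nf p.2 p.1)

-- decide lemmas (placeholders)
lemma nf_ne : ∀ u v : Fin 15, u ≠ v → nf u v ≠ u := by decide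
lemma pf_ne : ∀ u v : Fin 15, u ≠ v → pf u v ≠ u := by decide
lemma pf_nf : ∀ u v : Fin 15, u ≠ v → pf u (nf u v) = v := by decide
lemma nf_pf : ∀ u v : Fin 15, u ≠ v → nf u (pf u v) = v := by decide
lemma orbit : ∀ u v w : Fin 15, v ≠ u → w ≠ u → ∃ n, n < 14 ∧ (nf u)^[n] v = w := by decide
lemma fi_fstep : ∀ u v : Fin 15, u ≠ v → fi v (nf v u) = fi u v := by decide
lemma fi_lt : ∀ u v : Fin 15, u ≠ v → fi u v < 66 := by decide
lemma rep_fi : ∀ i : Fin 66, fi (rpu i.1) (rpv i.1) = i.1 ∧ rpu i.1 ≠ rpv i.1 := by decide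
lemma reach : ∀ u v : Fin 15, u ≠ v →
    ∃ n, n < 16 ∧ fstep^[n] (u, v) = (rpu (fi u v), rpv (fi u v)) := by decide
lemma count_lem : ∀ i : Fin 66,
    ((Finset.univ : Finset (Fin 15 × Fin 15)).filter
      (fun p => p.1 ≠ p.2 ∧ fi p.1 p.2 = i.1)).card = cnt i.1 := by decide
lemma cnt3 : ((Finset.univ : Finset (Fin 66)).filter (fun i => cnt i.1 = 3)).card = 65 := by decide
lemma cnt15 : ((Finset.univ : Finset (Fin 66)).filter (fun i => cnt i.1 = 15)).card = 1 := by decide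
lemma cnt_big : cnt 65 = 15 := by decide
lemma fi_ne_symm : ∀ u v : Fin 15, u ≠ v → fi u v ≠ fi v u := by decide
lemma dual_mult : ∀ u v u' v' : Fin 15, u ≠ v → u' ≠ v' →
    (u, v) ≠ (u', v') → (u, v) ≠ (v', u') →
    ¬(fi u v = fi u' v' ∧ fi v u = fi v' u') ∧
    ¬(fi u v = fi v' u' ∧ fi v u = fi u' v') := by decide
lemma lab_adj : ∀ u v : Fin 15, u ≠ v → fi u v ≠ 65 → fi v u ≠ 65 →
    lab (fi u v) = lab (fi v u) := by decide
lemma lab59 : lab 59 = true := by decide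
lemma lab0 : lab 0 = false := by decide

-- dart infrastructure
lemma adj_iff {a b : Fin 15} : G15.Adj a b ↔ a ≠ b := by simp

def mkD (u v : Fin 15) (h : u ≠ v) : D := ⟨(u, v), by simpa using h⟩

lemma dart_ne (d : D) : d.fst ≠ d.snd := d.fst_ne_snd

def rho : Equiv.Perm D where
  toFun d := ⟨(d.fst, nf d.fst d.snd), by
    simpa using (nf_ne d.fst d.snd (dart_ne d)).symm⟩
  invFun d := ⟨(d.fst, pf d.fst d.snd), by
    simpa using (pf_ne d.fst d.snd (dart_ne d)).symm⟩
  left_inv d := by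
    apply Dart.ext
    have := pf_nf d.fst d.snd (dart_ne d)
    simp only []
    exact Prod.ext rfl this
  right_inv d := by
    apply Dart.ext
    have := nf_pf d.fst d.snd (dart_ne d)
    exact Prod.ext rfl this

lemma rho_toProd (d : D) : (rho d).toProd = (d.fst, nf d.fst d.snd) := rfl

lemma phi_toProd (d : D) : (facePerm rho d).toProd = fstep d.toProd := rfl

def pidx (d : D) : Nat := fi d.fst d.snd

lemma pidx_lt (d : D) : pidx d < 66 := fi_lt _ _ (dart_ne d)

lemma pidx_phi (d : D) : pidx (facePerm rho d) = pidx d := by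
  have h := fi_fstep d.fst d.snd (dart_ne d)
  exact h

lemma pidx_phi_pow (n : ℕ) (d : D) : pidx ((facePerm rho ^ n) d) = pidx d := by
  induction n with
  | zero => rfl
  | succ n ih =>
      rw [pow_succ', Equiv.Perm.mul_apply, pidx_phi]
      exact ih

def repD (i : Fin 66) : D := mkD (rpu i.1) (rpv i.1) (rep_fi i).2

lemma pidx_repD (i : Fin 66) : pidx (repD i) = i.1 := (rep_fi i).1

lemma phi_pow_toProd (n : ℕ) (d : D) :
    ((facePerm rho ^ n) d).toProd = fstep^[n] d.toProd := by
  induction n with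
  | zero => rfl
  | succ n ih =>
      rw [pow_succ', Equiv.Perm.mul_apply, phi_toProd, ih]
      exact (Function.iterate_succ_apply' _ _ _).symm

lemma reach_dart (d : D) : ∃ n : ℕ, (facePerm rho ^ n) d = repD ⟨pidx d, pidx_lt d⟩ := by
  obtain ⟨n, _, hn⟩ := reach d.fst d.snd (dart_ne d)
  refine ⟨n, Dart.ext _ _ ?_⟩
  rw [phi_pow_toProd]
  have : d.toProd = (d.fst, d.snd) := rfl
  rw [this, hn]
  rfl

lemma sameCycle_iff (d d' : D) :
    (facePerm rho).SameCycle d d' ↔ pidx d = pidx d' := by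
  constructor
  · intro h
    obtain ⟨i, _, _, hi⟩ := h.exists_pow_eq''
    rw [← hi, pidx_phi_pow]
  · intro h
    obtain ⟨n, hn⟩ := reach_dart d
    obtain ⟨m, hm⟩ := reach_dart d'
    have he : repD ⟨pidx d, pidx_lt d⟩ = repD ⟨pidx d', pidx_lt d'⟩ := by
      congr 1
      exact Fin.ext h
    have h1 : (facePerm rho).SameCycle d (repD ⟨pidx d, pidx_lt d⟩) :=
      ⟨(n : ℤ), by rw [zpow_natCast]; exact hn⟩
    have h2 : (facePerm rho).SameCycle d' (repD ⟨pidx d, pidx_lt d⟩) :=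
      ⟨(m : ℤ), by rw [zpow_natCast, he]; exact hm⟩
    exact h1.trans h2.symm

lemma mem_faceOf {x d : D} : x ∈ faceOf rho d ↔ pidx d = pidx x := sameCycle_iff d x

lemma faceOf_eq_iff (d d' : D) : faceOf rho d = faceOf rho d' ↔ pidx d = pidx d' := by
  constructor
  · intro h
    have : d' ∈ faceOf rho d := h ▸ (mem_faceOf.mpr rfl)
    exact mem_faceOf.mp this
  · intro h
    ext x
    rw [mem_faceOf, mem_faceOf, h]

def PHI (i : Fin 66) : Set D := faceOf rho (repD i)

lemma PHI_inj : Function.Injective PHI := by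
  intro i j h
  have := (faceOf_eq_iff _ _).mp h
  rw [pidx_repD, pidx_repD] at this
  exact Fin.ext this

lemma faceOf_eq_PHI (d : D) : faceOf rho d = PHI ⟨pidx d, pidx_lt d⟩ := by
  rw [PHI, faceOf_eq_iff, pidx_repD]

lemma faces_eq : faces rho = Set.range PHI := by
  ext F
  constructor
  · rintro ⟨d, rfl⟩
    exact ⟨⟨pidx d, pidx_lt d⟩, (faceOf_eq_PHI d).symm⟩
  · rintro ⟨i, rfl⟩
    exact ⟨repD i, rfl⟩

lemma ncard_faces : (faces rho).ncard = 66 := by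
  rw [faces_eq, ← Nat.card_coe_set_eq]
  rw [Nat.card_congr (Equiv.ofInjective PHI PHI_inj).symm]
  simp

-- card of fibers
lemma card_fiber (m : ℕ) :
    ((Finset.univ : Finset D).filter (fun x => pidx x = m)).card =
    ((Finset.univ : Finset (Fin 15 × Fin 15)).filter
      (fun p => p.1 ≠ p.2 ∧ fi p.1 p.2 = m)).card := by
  apply Finset.card_bij (fun d _ => d.toProd)
  · intro d hd
    simp only [Finset.mem_filter, Finset.mem_univ, true_and] at hd ⊢
    exact ⟨dart_ne d, hd⟩
  · intro a ha b hb h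
    exact Dart.ext _ _ h
  · intro p hp
    simp only [Finset.mem_filter, Finset.mem_univ, true_and] at hp
    exact ⟨⟨(p.1, p.2), by simpa using hp.1⟩, by
      simp only [Finset.mem_filter, Finset.mem_univ, true_and]; exact hp.2, rfl⟩

lemma faceOf_as_finset (d : D) :
    faceOf rho d = ↑((Finset.univ : Finset D).filter (fun x => pidx x = pidx d)) := by
  ext x
  simp only [Finset.coe_filter, Finset.mem_univ, true_and, Set.mem_setOf_eq]
  rw [mem_faceOf]
  exact ⟨Eq.symm, Eq.symm⟩

lemma ncard_faceOf (d : D) : (faceOf rho d).ncard = cnt (pidx d) := by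
  rw [faceOf_as_finset, Set.ncard_coe_finset, card_fiber]
  exact count_lem ⟨pidx d, pidx_lt d⟩

lemma ncard_PHI (i : Fin 66) : (PHI i).ncard = cnt i.1 := by
  rw [PHI, ncard_faceOf, pidx_repD]

lemma sizes_eq (k : ℕ) :
    {F ∈ faces rho | F.ncard = k} = PHI '' {i : Fin 66 | cnt i.1 = k} := by
  ext F
  constructor
  · rintro ⟨hF, hk⟩
    rw [faces_eq] at hF
    obtain ⟨i, rfl⟩ := hF
    exact ⟨i, by rwa [Set.mem_setOf_eq, ← ncard_PHI], rfl⟩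
  · rintro ⟨i, hi, rfl⟩
    refine ⟨faces_eq ▸ ⟨i, rfl⟩, ?_⟩
    rw [ncard_PHI]
    exact hi

lemma setOf_fin_ncard {k : ℕ} :
    {i : Fin 66 | cnt i.1 = k}.ncard =
      ((Finset.univ : Finset (Fin 66)).filter (fun i => cnt i.1 = k)).card := by
  rw [← Set.ncard_coe_finset]
  congr 1
  ext i
  simp

lemma ncard_sizes3 : {F ∈ faces rho | F.ncard = 3}.ncard = 65 := by
  rw [sizes_eq, Set.ncard_image_of_injective _ PHI_inj, setOf_fin_ncard, cnt3]

lemma ncard_sizes15 : {F ∈ faces rho | F.ncard = 15}.ncard = 1 := by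
  rw [sizes_eq, Set.ncard_image_of_injective _ PHI_inj, setOf_fin_ncard, cnt15]

-- rotation system
lemma rho_pow_toProd (n : ℕ) (d : D) :
    ((rho ^ n) d).toProd = (d.fst, (nf d.fst)^[n] d.snd) := by
  induction n with
  | zero => rfl
  | succ n ih =>
      rw [pow_succ', Equiv.Perm.mul_apply, rho_toProd, ih, Function.iterate_succ_apply']

lemma rotsys : IsRotationSystem G15 rho := by
  constructor
  · intro d; rfl
  · intro d d' h
    obtain ⟨n, _, hn⟩ := orbit d.fst d.snd d'.snd (dart_ne d).symm (h ▸ (dart_ne d').symm)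
    refine ⟨n, Dart.ext _ _ ?_⟩
    rw [rho_pow_toProd, hn]
    exact Prod.ext h rfl

-- dual simple
lemma dual_simple : DualSimple rho := by
  constructor
  · intro d
    rw [Ne, faceOf_eq_iff]
    exact fi_ne_symm d.fst d.snd (dart_ne d)
  · intro d d' hedge
    rw [Ne, dart_edge_eq_iff] at hedge
    push_neg at hedge
    obtain ⟨h1, h2⟩ := hedge
    have hp1 : d.toProd ≠ d'.toProd := fun h => h1 (Dart.ext _ _ h)
    have hp2 : d.toProd ≠ (d'.snd, d'.fst) := fun h => h2 (Dart.ext _ _ h)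
    have := dual_mult d.fst d.snd d'.fst d'.snd (dart_ne d) (dart_ne d') hp1 hp2
    constructor
    · rintro ⟨ha, hb⟩
      rw [faceOf_eq_iff] at ha hb
      exact this.1 ⟨ha, hb⟩
    · rintro ⟨ha, hb⟩
      rw [faceOf_eq_iff] at ha hb
      exact this.2 ⟨ha, hb⟩

-- cutface
def bigF : Fin 66 := ⟨65, by norm_num⟩
def CC : Set D := PHI bigF

lemma CC_mem : CC ∈ faces rho := ⟨repD bigF, rfl⟩

lemma CC_ncard : CC.ncard = 15 := by rw [CC, ncard_PHI]; exact cnt_big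

def SS : Set (faces rho) := {F : faces rho | (F : Set D) ≠ CC}

def PP (x : ↥SS) : Prop := ∃ i : Fin 66, lab i.1 = true ∧ ((x : faces rho) : Set D) = PHI i

lemma adj_key {x y : ↥SS} (h : ((dualGraph rho).induce SS).Adj x y) : PP x ↔ PP y := by
  obtain ⟨hne, dd, h1, h2⟩ := h
  have h1' : faceOf rho dd = ((x : faces rho) : Set D) := h1
  have h2' : faceOf rho dd.symm = ((y : faces rho) : Set D) := h2
  have hx : ((x : faces rho) : Set D) ≠ CC := x.2
  have hy : ((y : faces rho) : Set D) ≠ CC := y.2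
  have e1 : faceOf rho dd = PHI ⟨pidx dd, pidx_lt dd⟩ := faceOf_eq_PHI dd
  have e2 : faceOf rho dd.symm = PHI ⟨pidx dd.symm, pidx_lt dd.symm⟩ := faceOf_eq_PHI dd.symm
  have hne1 : pidx dd ≠ 65 := by
    intro hcon
    apply hx
    rw [← h1', e1, CC]
    exact congrArg PHI (Fin.eq_of_val_eq hcon)
  have hne2 : pidx dd.symm ≠ 65 := by
    intro hcon
    apply hy
    rw [← h2', e2, CC]
    exact congrArg PHI (Fin.eq_of_val_eq hcon)
  have hlab : lab (pidx dd) = lab (pidx dd.symm) :=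
    lab_adj dd.fst dd.snd (dart_ne dd) hne1 hne2
  have fact : ∀ (z : ↥SS) (m : Fin 66), ((z : faces rho) : Set D) = PHI m →
      (PP z ↔ lab m.1 = true) := by
    intro z m hm
    constructor
    · rintro ⟨j, hj, hj2⟩
      rw [hm] at hj2
      have := PHI_inj hj2
      rw [this]; exact hj
    · intro hl
      exact ⟨m, hl, hm⟩
  rw [fact x ⟨pidx dd, pidx_lt dd⟩ (by rw [← h1', e1]),
      fact y ⟨pidx dd.symm, pidx_lt dd.symm⟩ (by rw [← h2', e2])]
  simp only [hlab]

lemma walk_key {x y : ↥SS} (w : ((dualGraph rho).induce SS).Walk x y) : PP x ↔ PP y := by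
  induction w with
  | nil => rfl
  | cons h p ih => exact (adj_key h).trans ih

lemma not_conn : ¬((dualGraph rho).induce SS).Connected := by
  intro hconn
  have hne59 : (⟨59, by norm_num⟩ : Fin 66) ≠ bigF := by decide
  have hne0 : (⟨0, by norm_num⟩ : Fin 66) ≠ bigF := by decide
  have m59 : PHI ⟨59, by norm_num⟩ ∈ faces rho := ⟨repD _, rfl⟩
  have m0 : PHI ⟨0, by norm_num⟩ ∈ faces rho := ⟨repD _, rfl⟩
  have s59 : (⟨PHI ⟨59, by norm_num⟩, m59⟩ : faces rho) ∈ SS := by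
    simp only [SS, Set.mem_setOf_eq]
    exact fun h => hne59 (PHI_inj h)
  have s0 : (⟨PHI ⟨0, by norm_num⟩, m0⟩ : faces rho) ∈ SS := by
    simp only [SS, Set.mem_setOf_eq]
    exact fun h => hne0 (PHI_inj h)
  obtain ⟨w⟩ := hconn.preconnected ⟨_, s59⟩ ⟨_, s0⟩
  have := (walk_key w).mp ⟨⟨59, by norm_num⟩, lab59, rfl⟩
  obtain ⟨i, hi, hieq⟩ := this
  have : i = ⟨0, by norm_num⟩ := PHI_inj hieq.symm
  rw [this] at hi
  rw [lab0] at hi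
  exact Bool.false_ne_true hi

lemma cutface : IsCutface rho CC := ⟨CC_mem, not_conn⟩

lemma edge_count : ((⊤ : SimpleGraph (Fin 15)).edgeSet.ncard : ℤ) = 105 := by
  rw [← SimpleGraph.coe_edgeFinset, Set.ncard_coe_finset,
    SimpleGraph.card_edgeFinset_top_eq_card_choose_two]
  norm_num [show (15:ℕ).choose 2 = 105 from rfl]

end K15P

open DualSep in
/-- There is a rotation system on `K_{15}` with 66 faces of the stated lengths, simple
dual, whose face of length 15 is a cutface; its genus is 13 = γ(K_{15}) + 2. -/
theorem stmt_K15 :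
    ∃ ρ : Equiv.Perm (⊤ : SimpleGraph (Fin 15)).Dart,
      IsRotationSystem ⊤ ρ ∧
      (faces ρ).ncard = 66 ∧
      {F ∈ faces ρ | F.ncard = 3}.ncard = 65 ∧
      {F ∈ faces ρ | F.ncard = 15}.ncard = 1 ∧
      DualSimple ρ ∧
      (∃ C ∈ faces ρ, C.ncard = 15 ∧ IsCutface ρ C) ∧
      ((Fintype.card (Fin 15) : ℤ) - ((⊤ : SimpleGraph (Fin 15)).edgeSet.ncard : ℤ)
          + ((faces ρ).ncard : ℤ) = 2 - 2 * 13) := by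

  refine ⟨K15P.rho, K15P.rotsys, K15P.ncard_faces, K15P.ncard_sizes3, K15P.ncard_sizes15,
    K15P.dual_simple, ⟨K15P.CC, K15P.CC_mem, K15P.CC_ncard, K15P.cutface⟩, ?_⟩
  rw [K15P.edge_count, K15P.ncard_faces]
  norm_num
end
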